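/- Let A be a unital complex Banach algebra equal to the norm closure of Im(A), let X be a complex Banach space, and let φ : A × A → X be a continuous ℂ-bilinear map such that φ(a,b) = 0 whenever a, b ∈ A satisfy a∘b = 0. Then there exists a continuous ℂ-linear map T : A → X such that φ(a,b) = T(a∘b) for all a, b ∈ A. -/

import Mathlib

private theorem key_idempotent_jordan
    {A X : Type*} [NormedRing A] [NormedAlgebra ℂ A]
    [NormedAddCommGroup X] [NormedSpace ℂ X]
    (φ : A →L[ℂ] A →L[ℂ] X)
    (h : ∀ a b : A, a * b + b * a = 0 → φ a b = 0)
    (b p : A) (hp : p * p = p) :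
    φ p b = (2⁻¹ : ℂ) • φ 1 (p * b + b * p) := by
  obtain ⟨q, hqdef⟩ : ∃ q : A, q = 1 - p := ⟨1 - p, rfl⟩
  have hpp : ∀ x : A, p * (p * x) = p * x := fun x => by rw [← mul_assoc, hp]
  have hpq : p * q = 0 := by rw [hqdef, mul_sub, mul_one, hp, sub_self]
  have hqp : q * p = 0 := by rw [hqdef, sub_mul, one_mul, hp, sub_self]
  have hone : (1 : A) = p + q := by rw [hqdef]; abel
  obtain ⟨v, hv⟩ : ∃ v : A, v = p * b * q + q * b * p := ⟨_, rfl⟩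
  have e1 : φ p (q * b * q) = 0 := by
    apply h
    have h1' : p * (q * b * q) = 0 := by rw [← mul_assoc, ← mul_assoc, hpq, zero_mul, zero_mul]
    have h2' : (q * b * q) * p = 0 := by rw [mul_assoc, hqp, mul_zero]
    rw [h1', h2', add_zero]
  have e2 : φ q (p * b * p) = 0 := by
    apply h
    have h1' : q * (p * b * p) = 0 := by rw [← mul_assoc, ← mul_assoc, hqp, zero_mul, zero_mul]
    have h2' : (p * b * p) * q = 0 := by rw [mul_assoc, hpq, mul_zero]
    rw [h1', h2', add_zero]
  have e3 : φ p v = φ q v := by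
    have hz : (p - q) * v + v * (p - q) = 0 := by
      rw [hv, hqdef]; noncomm_ring [hp, hpp]
    have := h _ _ hz
    rw [map_sub, ContinuousLinearMap.sub_apply, sub_eq_zero] at this
    exact this
  have bdec : b = p * b * p + v + q * b * q := by
    rw [hv, hqdef]; noncomm_ring
  have jdec : p * b + b * p = (p * b * p + p * b * p) + v := by
    rw [hv, hqdef]; noncomm_ring
  have hφ1 : φ 1 = φ p + φ q := by rw [hone, map_add]
  rw [jdec, hφ1]
  nth_rewrite 1 [bdec]
  simp only [map_add, ContinuousLinearMap.add_apply, e1, e2, add_zero, zero_add]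
  rw [e3]
  module

/-- Proposition 3.4 (second part): if a unital complex Banach algebra equals the norm
closure of the span of its idempotents, then every continuous bilinear map vanishing on
pairs with zero Jordan product factors continuously through the Jordan product. -/
theorem continuous_zero_jordan_product_determined_of_closure_span_idempotents
    {A X : Type*} [NormedRing A] [NormedAlgebra ℂ A] [CompleteSpace A]
    [NormedAddCommGroup X] [NormedSpace ℂ X] [CompleteSpace X]
    (hA : closure ((Submodule.span ℂ {p : A | p * p = p} : Submodule ℂ A) : Set A) = Set.univ)
    (φ : A →L[ℂ] A →L[ℂ] X)
    (h : ∀ a b : A, a * b + b * a = 0 → φ a b = 0) :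
    ∃ T : A →L[ℂ] X, ∀ a b : A, φ a b = T (a * b + b * a) := by
  refine ⟨(2⁻¹ : ℂ) • φ 1, fun a b => ?_⟩
  -- the continuous linear map a ↦ a * b + b * a
  set J : A →L[ℂ] A :=
    (ContinuousLinearMap.mul ℂ A).flip b + ContinuousLinearMap.mul ℂ A b with hJ
  have hJapp : ∀ x : A, J x = x * b + b * x := fun x => rfl
  -- the continuous linear map a ↦ φ a b - 2⁻¹ • φ 1 (a * b + b * a)
  set F : A →L[ℂ] X := φ.flip b - (2⁻¹ : ℂ) • ((φ 1).comp J) with hF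
  have hFapp : ∀ x : A, F x = φ x b - (2⁻¹ : ℂ) • φ 1 (x * b + b * x) := fun x => rfl
  have hspan : (Submodule.span ℂ {p : A | p * p = p}) ≤ LinearMap.ker (F : A →ₗ[ℂ] X) := by
    rw [Submodule.span_le]
    intro p hp
    simp only [SetLike.mem_coe, LinearMap.mem_ker, ContinuousLinearMap.coe_coe]
    rw [hFapp p, key_idempotent_jordan φ h b p hp, sub_self]
  have hcl : closure ((Submodule.span ℂ {p : A | p * p = p} : Submodule ℂ A) : Set A)
      ⊆ (LinearMap.ker (F : A →ₗ[ℂ] X) : Set A) :=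
    closure_minimal hspan (ContinuousLinearMap.isClosed_ker F)
  have ha : a ∈ (LinearMap.ker (F : A →ₗ[ℂ] X) : Set A) := hcl (by rw [hA]; trivial)
  have hFa : F a = 0 := ha
  rw [hFapp a, sub_eq_zero] at hFa
  rw [hFa, ContinuousLinearMap.smul_apply]
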